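/- Let R = [[p,q],[q̄,p̄]] be a positive symplectic transformation on ℂ^m ⊕ ℂ^m (so p = p* > 0, q = qᵀ). If Ker(p - I) = {0}, then q is invertible, u := q|q|^{-1} is unitary, the operator M := (1/√2)[[I, -u],[u*, I]] is unitary, and R = M · diag(p + √(p² - I), p̄ - √(p̄² - I)) · M*. -/

import Mathlib

open Matrix
open scoped ComplexOrder

/-- The positive semidefinite square root of a positive semidefinite matrix
(the definition `Matrix.PosSemidef.sqrt` of the older Mathlib, since removed). -/
noncomputable def Matrix.PosSemidef.sqrt {n 𝕜 : Type*} [RCLike 𝕜] [Fintype n] [DecidableEq n]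
    {A : Matrix n n 𝕜} (hA : A.PosSemidef) : Matrix n n 𝕜 :=
  hA.1.eigenvectorUnitary.1 * diagonal ((↑) ∘ (√·) ∘ hA.1.eigenvalues) *
  (star hA.1.eigenvectorUnitary : Matrix n n 𝕜)

open scoped MatrixOrder in
theorem Matrix.PosSemidef.sqrt_eq_cfcSqrt {n 𝕜 : Type*} [RCLike 𝕜] [Fintype n] [DecidableEq n]
    {A : Matrix n n 𝕜} (hA : A.PosSemidef) : hA.sqrt = CFC.sqrt A := by
  rw [CFC.sqrt_eq_cfc, cfc_nnreal_eq_real _ A hA.nonneg, hA.1.cfc_eq]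
  simp only [Matrix.PosSemidef.sqrt, IsHermitian.cfc, Unitary.conjStarAlgAut_apply]
  congr 3
  funext i
  simp [Real.coe_sqrt, Real.coe_toNNReal', max_eq_left (hA.eigenvalues_nonneg i)]

open scoped MatrixOrder in
theorem Matrix.PosSemidef.posSemidef_sqrt {n 𝕜 : Type*} [RCLike 𝕜] [Fintype n] [DecidableEq n]
    {A : Matrix n n 𝕜} (hA : A.PosSemidef) : hA.sqrt.PosSemidef := by
  rw [hA.sqrt_eq_cfcSqrt]; exact (CFC.sqrt_nonneg A).posSemidef

open scoped MatrixOrder in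
theorem Matrix.PosSemidef.sqrt_mul_self {n 𝕜 : Type*} [RCLike 𝕜] [Fintype n] [DecidableEq n]
    {A : Matrix n n 𝕜} (hA : A.PosSemidef) : hA.sqrt * hA.sqrt = A := by
  rw [hA.sqrt_eq_cfcSqrt]; exact CFC.sqrt_mul_sqrt_self A hA.nonneg

open scoped MatrixOrder in
theorem Matrix.PosSemidef.eq_of_sq_eq_sq {n 𝕜 : Type*} [RCLike 𝕜] [Fintype n] [DecidableEq n]
    {A B : Matrix n n 𝕜} (hA : A.PosSemidef) (hB : B.PosSemidef) (h : A ^ 2 = B ^ 2) :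
    A = B := by
  rw [← CFC.sqrt_sq A hA.nonneg, h, CFC.sqrt_sq B hB.nonneg]

open scoped MatrixOrder in
theorem Matrix.PosSemidef.eq_sqrt_of_sq_eq {n 𝕜 : Type*} [RCLike 𝕜] [Fintype n] [DecidableEq n]
    {A B : Matrix n n 𝕜} (hB : B.PosSemidef) (hA : A.PosSemidef) (h : B ^ 2 = A) :
    B = hA.sqrt := by
  rw [hA.sqrt_eq_cfcSqrt, ← h, CFC.sqrt_sq B hB.nonneg]

/-- Let `R = [[p,q],[q̄,p̄]]` be a positive symplectic transformation on
`ℂ^m ⊕ ℂ^m` (so `p = p* > 0`, `q = qᵀ`).  If `Ker (p - 1) = {0}`, then `q` is invertible,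
`u := q * |q|⁻¹` is unitary, the operator `M := (1/√2)·[[1, -u],[u*, 1]]` is unitary, and
`R = M * diag(p + √(p² - 1), p̄ - √(p̄² - 1)) * Mᴴ`. -/
theorem positive_symplectic_diagonalization {m : ℕ}
    (p q : Matrix (Fin m) (Fin m) ℂ)
    (S R : Matrix (Fin m ⊕ Fin m) (Fin m ⊕ Fin m) ℂ)
    (hS : S = Matrix.fromBlocks 1 0 0 (-1))
    (hR : R = Matrix.fromBlocks p q (q.map (starRingEnd ℂ)) (p.map (starRingEnd ℂ)))
    (hsymp : Rᴴ * S * R = S)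
    (hp : p.PosDef) (hq : qᵀ = q)
    (hker : ∀ v : Fin m → ℂ, (p - 1).mulVec v = 0 → v = 0) :
    IsUnit q ∧
    (q * ((Matrix.posSemidef_conjTranspose_mul_self q).sqrt)⁻¹)ᴴ *
      (q * ((Matrix.posSemidef_conjTranspose_mul_self q).sqrt)⁻¹) = 1 ∧
    (q * ((Matrix.posSemidef_conjTranspose_mul_self q).sqrt)⁻¹) *
      (q * ((Matrix.posSemidef_conjTranspose_mul_self q).sqrt)⁻¹)ᴴ = 1 ∧
    (((Real.sqrt 2 : ℂ))⁻¹ •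
        Matrix.fromBlocks 1 (-(q * ((Matrix.posSemidef_conjTranspose_mul_self q).sqrt)⁻¹))
          (q * ((Matrix.posSemidef_conjTranspose_mul_self q).sqrt)⁻¹)ᴴ 1)ᴴ *
      (((Real.sqrt 2 : ℂ))⁻¹ •
        Matrix.fromBlocks 1 (-(q * ((Matrix.posSemidef_conjTranspose_mul_self q).sqrt)⁻¹))
          (q * ((Matrix.posSemidef_conjTranspose_mul_self q).sqrt)⁻¹)ᴴ 1) = 1 ∧
    ∃ hs : (p * p - 1).PosSemidef,
      R = (((Real.sqrt 2 : ℂ))⁻¹ •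
            Matrix.fromBlocks 1 (-(q * ((Matrix.posSemidef_conjTranspose_mul_self q).sqrt)⁻¹))
              (q * ((Matrix.posSemidef_conjTranspose_mul_self q).sqrt)⁻¹)ᴴ 1) *
          Matrix.fromBlocks (p + hs.sqrt) 0 0
            (p.map (starRingEnd ℂ) - hs.sqrt.map (starRingEnd ℂ)) *
          (((Real.sqrt 2 : ℂ))⁻¹ •
            Matrix.fromBlocks 1 (-(q * ((Matrix.posSemidef_conjTranspose_mul_self q).sqrt)⁻¹))
              (q * ((Matrix.posSemidef_conjTranspose_mul_self q).sqrt)⁻¹)ᴴ 1)ᴴ := by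
  have hp1 : pᴴ = p := hp.1
  -- conjugate of p is pᵀ
  have hpt : p.map (starRingEnd ℂ) = pᵀ := by
    ext i j
    simp only [Matrix.map_apply, Matrix.transpose_apply]
    exact congrFun (congrFun hp1 j) i
  -- conjugate of q is qᴴ
  have hqc : q.map (starRingEnd ℂ) = qᴴ := by
    ext i j
    simp only [Matrix.map_apply, Matrix.conjTranspose_apply]
    rw [show q j i = qᵀ i j from rfl, hq]
    rfl
  subst hS hR
  rw [hpt, hqc, Matrix.fromBlocks_conjTranspose, Matrix.fromBlocks_multiply,
    Matrix.fromBlocks_multiply] at hsymp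
  simp only [Matrix.mul_zero, Matrix.mul_one, Matrix.mul_neg, Matrix.zero_mul, Matrix.one_mul,
    add_zero, zero_add, Matrix.conjTranspose_conjTranspose, hp1,
    hp.1.transpose.eq] at hsymp
  obtain ⟨E1, E2, E3, E4⟩ := Matrix.fromBlocks_inj.mp hsymp
  -- E1 : p * p + -q * qᴴ = 1 ; E2 : p * q + -q * pᵀ = 0 ; E4 : qᴴ * q + -pᵀ * pᵀ = -1
  have hqqH : q * qᴴ = p * p - 1 := by
    have := E1; linear_combination (norm := noncomm_ring) -this
  have hpq : p * q = q * pᵀ := by linear_combination (norm := noncomm_ring) E2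
  have hHqq : qᴴ * q = pᵀ * pᵀ - 1 := by linear_combination (norm := noncomm_ring) E4
  -- positivity of p*p - 1
  have hs : (p * p - 1).PosSemidef := by
    rw [← hqqH]; exact Matrix.posSemidef_self_mul_conjTranspose q
  have hps := Matrix.posSemidef_conjTranspose_mul_self q
  set L : Matrix (Fin m) (Fin m) ℂ := hps.sqrt with hLdef
  have hLH : Lᴴ = L := hps.posSemidef_sqrt.1
  have hLL : L * L = qᴴ * q := hps.sqrt_mul_self
  -- pᵀ - 1 is injective hence invertible
  have hpT : pᵀ.PosDef := hp.transpose
  have hker' : ∀ v : Fin m → ℂ, (pᵀ - 1).mulVec v = 0 → v = 0 := by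
    intro v hv
    have h2 : (p - 1).mulVec (star v) = 0 := by
      funext i
      have h0 := congrArg (starRingEnd ℂ) (congrFun hv i)
      simp only [Matrix.mulVec, dotProduct, map_sum, Pi.zero_apply, map_zero,
        Matrix.sub_apply, Matrix.transpose_apply] at h0 ⊢
      refine Eq.trans (Finset.sum_congr rfl fun k _ => ?_) h0
      rw [RingHom.map_mul, map_sub]
      congr 1
      · congr 1
        · exact (congrFun (congrFun hp1 i) k).symm
        · by_cases h : i = k <;> simp [Matrix.one_apply, h]
    have h3 := hker _ h2
    have h4 := congrArg star h3
    simpa using h4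
  have hpT1unit : IsUnit (pᵀ - 1) := by
    rw [← Matrix.mulVec_injective_iff_isUnit]
    intro x y hxy
    have : (pᵀ - 1).mulVec (x - y) = 0 := by
      rw [Matrix.mulVec_sub, hxy, sub_self]
    have := hker' _ this
    exact sub_eq_zero.mp this
  have hpT2unit : IsUnit (pᵀ + 1) := (hpT.add_posSemidef Matrix.PosSemidef.one).isUnit
  have hqHq_unit : IsUnit (qᴴ * q) := by
    have : qᴴ * q = (pᵀ - 1) * (pᵀ + 1) := by rw [hHqq]; noncomm_ring
    rw [this]; exact hpT1unit.mul hpT2unit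
  -- q is invertible
  have hq_unit : IsUnit q := by
    rw [Matrix.isUnit_iff_isUnit_det]
    rw [Matrix.isUnit_iff_isUnit_det, Matrix.det_mul] at hqHq_unit
    exact isUnit_of_mul_isUnit_right hqHq_unit
  have hL_unit : IsUnit L := by
    rw [Matrix.isUnit_iff_isUnit_det]
    rw [← hLL, Matrix.isUnit_iff_isUnit_det, Matrix.det_mul] at hqHq_unit
    exact isUnit_of_mul_isUnit_right hqHq_unit
  have hLdet : IsUnit L.det := Matrix.isUnit_iff_isUnit_det L |>.mp hL_unit
  set u : Matrix (Fin m) (Fin m) ℂ := q * L⁻¹ with hudef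
  have huL : u * L = q := by
    rw [hudef, Matrix.mul_assoc, Matrix.nonsing_inv_mul _ hLdet, Matrix.mul_one]
  have huH : uᴴ = L⁻¹ * qᴴ := by
    rw [hudef, Matrix.conjTranspose_mul, Matrix.conjTranspose_nonsing_inv, hLH]
  have hLuH : L * uᴴ = qᴴ := by
    rw [huH, ← Matrix.mul_assoc, Matrix.mul_nonsing_inv _ hLdet, Matrix.one_mul]
  have huu : uᴴ * u = 1 := by
    rw [huH, hudef, Matrix.mul_assoc, ← Matrix.mul_assoc qᴴ, ← hLL,
      Matrix.mul_assoc, Matrix.mul_nonsing_inv _ hLdet, Matrix.mul_one,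
      Matrix.nonsing_inv_mul _ hLdet]
  have huu' : u * uᴴ = 1 := mul_eq_one_comm.mp huu
  -- u pᵀ uᴴ = p
  have hupb : u * pᵀ * uᴴ = p := by
    have hX : (u * pᵀ * uᴴ).PosSemidef := hpT.posSemidef.mul_mul_conjTranspose_same u
    refine hX.eq_of_sq_eq_sq hp.posSemidef ?_
    have : (u * pᵀ * uᴴ) ^ 2 = u * (pᵀ * pᵀ) * uᴴ := by
      rw [pow_two]
      calc u * pᵀ * uᴴ * (u * pᵀ * uᴴ) = u * pᵀ * (uᴴ * u) * pᵀ * uᴴ := by noncomm_ring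
        _ = u * (pᵀ * pᵀ) * uᴴ := by rw [huu]; noncomm_ring
    rw [this, show pᵀ * pᵀ = 1 + qᴴ * q by rw [hHqq]; noncomm_ring]
    have : u * (1 + qᴴ * q) * uᴴ = u * uᴴ + (u * L) * (L * uᴴ) := by
      rw [← hLL]; noncomm_ring
    rw [this, huu', huL, hLuH, hqqH, pow_two]
    noncomm_ring
  have hpu : p * u = u * pᵀ := by
    calc p * u = (u * pᵀ * uᴴ) * u := by rw [hupb]
      _ = u * pᵀ * (uᴴ * u) := by noncomm_ring
      _ = u * pᵀ := by rw [huu, Matrix.mul_one]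
  set t : Matrix (Fin m) (Fin m) ℂ := hs.sqrt with htdef
  have htH : tᴴ = t := hs.posSemidef_sqrt.1
  have htt : t * t = p * p - 1 := hs.sqrt_mul_self
  -- t = u L uᴴ
  have htu : u * L * uᴴ = t := by
    refine (hps.posSemidef_sqrt.mul_mul_conjTranspose_same u).eq_sqrt_of_sq_eq hs ?_
    have : (u * L * uᴴ) ^ 2 = (u * L) * (uᴴ * u) * (L * uᴴ) := by rw [pow_two]; noncomm_ring
    rw [this, huu, huL, hLuH, Matrix.mul_one, hqqH]
  have htq : t * u = q := by
    calc t * u = u * L * (uᴴ * u) := by rw [← htu]; noncomm_ring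
      _ = q := by rw [huu, Matrix.mul_one, huL]
  -- L = conj t
  have hLt : t.map (starRingEnd ℂ) = L := by
    have h1 : (t.map (starRingEnd ℂ)) = tᵀ := by
      ext i j
      simp only [Matrix.map_apply, Matrix.transpose_apply]
      exact congrFun (congrFun htH j) i
    rw [h1]
    refine (hs.posSemidef_sqrt.transpose).eq_sqrt_of_sq_eq hps ?_
    rw [pow_two, ← Matrix.transpose_mul, htt]
    rw [Matrix.transpose_sub, Matrix.transpose_mul, Matrix.transpose_one, ← hHqq]
  -- remaining identities
  have huHp : uᴴ * p = pᵀ * uᴴ := by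
    have h := congrArg Matrix.conjTranspose hpu
    simp only [Matrix.conjTranspose_mul, hp1, hp.1.transpose.eq] at h
    exact h
  have huHt : uᴴ * t = qᴴ := by
    have := congrArg Matrix.conjTranspose htq
    rwa [Matrix.conjTranspose_mul, htH] at this
  have huHtu : uᴴ * t * u = L := by
    calc uᴴ * t * u = (uᴴ * u) * L * (uᴴ * u) := by rw [← htu]; noncomm_ring
      _ = L := by rw [huu]; noncomm_ring
  -- scalar facts
  set c : ℂ := ((Real.sqrt 2 : ℝ) : ℂ)⁻¹ with hcdef
  have hcstar : star c = c := by
    rw [hcdef, ← Complex.ofReal_inv]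
    exact Complex.conj_ofReal _
  have hcc : c * c = (2 : ℂ)⁻¹ := by
    rw [hcdef, ← mul_inv]
    congr 1
    rw [← Complex.ofReal_mul, Real.mul_self_sqrt (by norm_num)]
    norm_num
  set A : Matrix (Fin m ⊕ Fin m) (Fin m ⊕ Fin m) ℂ := Matrix.fromBlocks 1 (-u) uᴴ 1 with hAdef
  have hAH : Aᴴ = Matrix.fromBlocks 1 u (-uᴴ) 1 := by
    rw [hAdef, Matrix.fromBlocks_conjTranspose]
    simp
  refine ⟨hq_unit, huu, huu', ?_, hs, ?_⟩
  · -- M unitary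
    rw [Matrix.conjTranspose_smul, hcstar, Matrix.smul_mul, Matrix.mul_smul, smul_smul, hcc,
      hAH, hAdef, Matrix.fromBlocks_multiply]
    simp only [Matrix.one_mul, Matrix.mul_one, Matrix.neg_mul, Matrix.mul_neg, neg_neg,
      add_neg_cancel, neg_add_cancel, huu, huu']
    rw [show (1 : Matrix (Fin m) (Fin m) ℂ) + 1 = (2:ℂ) • 1 by rw [two_smul]]
    have h2 : Matrix.fromBlocks ((2:ℂ) • (1 : Matrix (Fin m) (Fin m) ℂ)) 0 0 ((2:ℂ) • 1) =
        (2:ℂ) • (1 : Matrix (Fin m ⊕ Fin m) (Fin m ⊕ Fin m) ℂ) := by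
      rw [← Matrix.fromBlocks_one, Matrix.fromBlocks_smul, smul_zero]
    rw [h2, smul_smul]
    norm_num
  · -- diagonalization
    rw [hqc, hpt, ← htdef, hLt]
    have hsub1 : u * (pᵀ - L) * uᴴ = p - t := by
      rw [Matrix.mul_sub, Matrix.sub_mul, hupb, htu]
    have huHpu : uᴴ * p * u = pᵀ := by
      rw [huHp, Matrix.mul_assoc, huu, Matrix.mul_one]
    have hADA : A * Matrix.fromBlocks (p + t) 0 0 (pᵀ - L) * Aᴴ =
        (2 : ℂ) • Matrix.fromBlocks p q qᴴ pᵀ := by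
      rw [hAH, hAdef, Matrix.fromBlocks_multiply, Matrix.fromBlocks_multiply,
        Matrix.fromBlocks_smul]
      refine Matrix.fromBlocks_inj.mpr ⟨?_, ?_, ?_, ?_⟩
      · rw [two_smul]
        linear_combination (norm := noncomm_ring) hsub1
      · rw [two_smul]
        linear_combination (norm := noncomm_ring) hpu + htq + huL
      · rw [two_smul]
        linear_combination (norm := noncomm_ring) huHp + huHt + hLuH
      · rw [two_smul]
        linear_combination (norm := noncomm_ring) huHpu + huHtu
    rw [Matrix.conjTranspose_smul, hcstar, Matrix.smul_mul, Matrix.smul_mul, Matrix.mul_smul,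
      smul_smul, hcc, hADA, smul_smul]
    norm_num
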